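/- Let p be a complex number with |p| < 1. Then \int_0^{2\pi} \frac{dt}{|e^{it}-p|^4} = 2\pi \left( \frac{1}{(1-|p|^2)^2} + \frac{2|p|^2}{(1-|p|^2)^3} \right). -/

import Mathlib

set_option maxHeartbeats 1000000

open Complex Metric Set intervalIntegral

private lemma circleIntegral_add' {f g : ℂ → ℂ} {c : ℂ} {R : ℝ}
    (hf : CircleIntegrable f c R) (hg : CircleIntegrable g c R) :
    (∮ z in C(c, R), (f z + g z)) = (∮ z in C(c, R), f z) + ∮ z in C(c, R), g z := by
  simp only [circleIntegral, smul_add, intervalIntegral.integral_add hf.out hg.out]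

private lemma stmt_5_aux (p q z d : ℂ) (hrel : d = 1 - p*q) (hd : d ≠ 0)
    (hzp : z - p ≠ 0) (hzq : (1:ℂ) - q*z ≠ 0) :
    z / ((z - p) ^ 2 * (1 - q * z) ^ 2)
      = ((1 + p * q) / d ^ 3) * (z - p)⁻¹ + ((p / d ^ 2) * ((z - p)^2)⁻¹ +
          (((1 + p * q) / d ^ 3) * q / (1 - q * z) + q / d ^ 2 / (1 - q * z) ^ 2)) := by
  have hd3 : d ^ 3 ≠ 0 := pow_ne_zero _ hd
  have hd2 : d ^ 2 ≠ 0 := pow_ne_zero _ hd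
  have hzp2 : (z - p) ^ 2 ≠ 0 := pow_ne_zero _ hzp
  have hzq2 : ((1:ℂ) - q * z) ^ 2 ≠ 0 := pow_ne_zero _ hzq
  have hD : d ^ 3 * ((z - p) ^ 2 * (1 - q * z) ^ 2) ≠ 0 :=
    mul_ne_zero hd3 (mul_ne_zero hzp2 hzq2)
  have e1 : ((1 + p * q) / d ^ 3) * (z - p)⁻¹
      = ((1 + p * q) * ((z - p) * (1 - q * z) ^ 2)) / (d ^ 3 * ((z - p) ^ 2 * (1 - q * z) ^ 2)) := by
    rw [inv_eq_one_div, div_mul_div_comm, div_eq_div_iff (mul_ne_zero hd3 hzp) hD]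
    ring
  have e2 : (p / d ^ 2) * ((z - p) ^ 2)⁻¹
      = (p * (d * (1 - q * z) ^ 2)) / (d ^ 3 * ((z - p) ^ 2 * (1 - q * z) ^ 2)) := by
    rw [inv_eq_one_div, div_mul_div_comm, div_eq_div_iff (mul_ne_zero hd2 hzp2) hD]
    ring
  have e3 : ((1 + p * q) / d ^ 3) * q / (1 - q * z)
      = ((1 + p * q) * q * ((z - p) ^ 2 * (1 - q * z))) / (d ^ 3 * ((z - p) ^ 2 * (1 - q * z) ^ 2)) := by
    rw [div_mul_eq_mul_div, div_div, div_eq_div_iff (mul_ne_zero hd3 hzq) hD]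
    ring
  have e4 : q / d ^ 2 / (1 - q * z) ^ 2
      = (q * (d * (z - p) ^ 2)) / (d ^ 3 * ((z - p) ^ 2 * (1 - q * z) ^ 2)) := by
    rw [div_div, div_eq_div_iff (mul_ne_zero hd2 hzq2) hD]
    ring
  rw [e1, e2, e3, e4, ← add_div, ← add_div, ← add_div,
    div_eq_div_iff (mul_ne_zero hzp2 hzq2) hD]
  subst hrel
  ring

theorem stmt_5 (p : ℂ) (hp : ‖p‖ < 1) :
    ∫ t in (0:ℝ)..(2 * Real.pi),
        1 / (‖Complex.exp (t * Complex.I) - p‖) ^ 4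
      = 2 * Real.pi * (1 / (1 - (‖p‖) ^ 2) ^ 2 +
          2 * (‖p‖) ^ 2 / (1 - (‖p‖) ^ 2) ^ 3) := by
  set q : ℂ := (starRingEnd ℂ) p with hqdef
  have habsq : ‖q‖ = ‖p‖ := Complex.norm_conj p
  have habs0 : (0:ℝ) ≤ ‖p‖ := norm_nonneg p
  have hpq : ‖p * q‖ < 1 := by
    rw [norm_mul, habsq]; nlinarith
  have hd : (1:ℂ) - p * q ≠ 0 := by
    intro h
    rw [sub_eq_zero] at h
    rw [← h] at hpq
    simp at hpq
  set A : ℂ := (1 + p * q) / (1 - p * q) ^ 3 with hAdef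
  set B : ℂ := p / (1 - p * q) ^ 2 with hBdef
  clear_value A B
  have hden : ∀ z : ℂ, ‖z‖ ≤ 1 → (1:ℂ) - q * z ≠ 0 := by
    intro z hz h
    rw [sub_eq_zero] at h
    have h2 : ‖q * z‖ < 1 := by
      rw [norm_mul, habsq]; nlinarith
    rw [← h] at h2; simp at h2
  have key : (∮ z in C((0:ℂ), 1), z / ((z - p) ^ 2 * (1 - q * z) ^ 2))
      = 2 * Real.pi * I * A := by
    have hsphere : ∀ z ∈ sphere (0:ℂ) 1, ‖z‖ = 1 := by
      intro z hz
      simpa [Complex.dist_eq] using hz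
    have hEq : EqOn (fun z : ℂ => z / ((z - p) ^ 2 * (1 - q * z) ^ 2))
        (fun z : ℂ => A * (z - p)⁻¹ + (B * (z - p) ^ (-2 : ℤ) +
          (A * q / (1 - q * z) + q / (1 - p * q) ^ 2 / (1 - q * z) ^ 2)))
        (sphere (0:ℂ) 1) := by
      intro z hz
      have h1 : ‖z‖ = 1 := hsphere z hz
      have hzp : z - p ≠ 0 := by
        intro h; rw [sub_eq_zero] at h; rw [h] at h1; rw [h1] at hp; exact lt_irrefl 1 hp
      have hzq : (1:ℂ) - q * z ≠ 0 := hden z (le_of_eq h1)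
      simp only [hAdef, hBdef]
      have hzpow : (z - p) ^ (-2 : ℤ) = ((z - p) ^ 2)⁻¹ := by
        rw [zpow_neg, show ((2:ℤ)) = ((2:ℕ):ℤ) from rfl, zpow_natCast]
      rw [hzpow]
      exact stmt_5_aux p q z (1 - p * q) rfl hd hzp hzq
    rw [circleIntegral.integral_congr zero_le_one hEq]
    have hc1 : CircleIntegrable (fun z : ℂ => A * (z - p)⁻¹) 0 1 := by
      apply ContinuousOn.circleIntegrable zero_le_one
      apply continuousOn_const.mul
      apply ContinuousOn.inv₀ (by fun_prop)
      intro z hz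
      have h1 : ‖z‖ = 1 := hsphere z hz
      intro h; rw [sub_eq_zero] at h; rw [h] at h1; rw [h1] at hp; exact lt_irrefl 1 hp
    have hc2 : CircleIntegrable (fun z : ℂ => B * (z - p) ^ (-2 : ℤ)) 0 1 := by
      apply ContinuousOn.circleIntegrable zero_le_one
      apply continuousOn_const.mul
      apply ContinuousOn.zpow₀ (by fun_prop)
      intro z hz
      left
      have h1 : ‖z‖ = 1 := hsphere z hz
      intro h; rw [sub_eq_zero] at h; rw [h] at h1; rw [h1] at hp; exact lt_irrefl 1 hp
    have hc3 : CircleIntegrable (fun z : ℂ =>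
        A * q / (1 - q * z) + q / (1 - p * q) ^ 2 / (1 - q * z) ^ 2) 0 1 := by
      apply ContinuousOn.circleIntegrable zero_le_one
      apply ContinuousOn.add
      · exact continuousOn_const.div (by fun_prop) fun z hz => hden z (le_of_eq (hsphere z hz))
      · exact continuousOn_const.div (by fun_prop)
          fun z hz => pow_ne_zero 2 (hden z (le_of_eq (hsphere z hz)))
    have hsplit : (∮ z in C((0:ℂ), 1), (A * (z - p)⁻¹ + (B * (z - p) ^ (-2 : ℤ) +
          (A * q / (1 - q * z) + q / (1 - p * q) ^ 2 / (1 - q * z) ^ 2))))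
        = (∮ z in C((0:ℂ), 1), A * (z - p)⁻¹) + ((∮ z in C((0:ℂ), 1), B * (z - p) ^ (-2 : ℤ)) +
          (∮ z in C((0:ℂ), 1), (A * q / (1 - q * z) + q / (1 - p * q) ^ 2 / (1 - q * z) ^ 2))) :=
      (circleIntegral_add' hc1 (hc2.add hc3)).trans
        (congrArg (fun x => (∮ z in C((0:ℂ), 1), A * (z - p)⁻¹) + x)
          (circleIntegral_add' hc2 hc3))
    rw [hsplit]
    have e1 : (∮ z in C((0:ℂ), 1), A * (z - p)⁻¹) = A * (2 * Real.pi * I) := by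
      rw [circleIntegral.integral_const_mul,
        circleIntegral.integral_sub_inv_of_mem_ball (by simpa [Complex.dist_eq] using hp)]
    have e2 : (∮ z in C((0:ℂ), 1), B * (z - p) ^ (-2 : ℤ)) = 0 := by
      rw [circleIntegral.integral_const_mul,
        circleIntegral.integral_sub_zpow_of_ne (by decide) 0 p 1, mul_zero]
    have e3 : (∮ z in C((0:ℂ), 1),
        (A * q / (1 - q * z) + q / (1 - p * q) ^ 2 / (1 - q * z) ^ 2)) = 0 := by
      apply Complex.circleIntegral_eq_zero_of_differentiable_on_off_countable zero_le_one
        Set.countable_empty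
      · apply ContinuousOn.add
        · apply continuousOn_const.div (by fun_prop)
          intro z hz
          apply hden z
          simpa [Complex.dist_eq] using hz
        · apply continuousOn_const.div (by fun_prop)
          intro z hz
          apply pow_ne_zero 2
          apply hden z
          simpa [Complex.dist_eq] using hz
      · intro z hz
        have hz1 : ‖z‖ ≤ 1 := by
          have h := hz.1
          simp only [mem_ball, Complex.dist_eq, sub_zero] at h
          exact h.le
        have h0 : (1:ℂ) - q * z ≠ 0 := hden z hz1
        apply DifferentiableAt.add
        · exact (differentiableAt_const _).div (by fun_prop) h0
        · exact (differentiableAt_const _).div (by fun_prop) (pow_ne_zero 2 h0)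
    rw [e1, e2, e3]
    ring
  have key2 : ∀ t : ℝ, ((1 / (‖Complex.exp (t * I) - p‖) ^ 4 : ℝ) : ℂ)
      = -I * (deriv (circleMap 0 1) t *
          (circleMap 0 1 t / ((circleMap 0 1 t - p) ^ 2 * (1 - q * circleMap 0 1 t) ^ 2))) := by
    intro t
    have hcm : circleMap 0 1 t = Complex.exp (t * I) := by
      simp [circleMap]
    rw [deriv_circleMap, hcm]
    set z : ℂ := Complex.exp (t * I) with hzdef
    clear_value z
    have habsz : ‖z‖ = 1 := by
      rw [hzdef]; exact Complex.norm_exp_ofReal_mul_I t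
    have hzc : z * (starRingEnd ℂ) z = 1 := by
      rw [Complex.mul_conj, Complex.normSq_eq_norm_sq, habsz]
      norm_num
    have hzp : z - p ≠ 0 := by
      intro h; rw [sub_eq_zero] at h; rw [h] at habsz; rw [habsz] at hp; exact lt_irrefl 1 hp
    have hzq : (1:ℂ) - q * z ≠ 0 := hden z (le_of_eq habsz)
    have hzpc : (starRingEnd ℂ) z - q ≠ 0 := by
      intro h
      apply hzp
      rw [sub_eq_zero] at h
      rw [sub_eq_zero, ← Complex.conj_conj z, h, hqdef, Complex.conj_conj]
    have h4 : ((‖z - p‖ : ℝ) : ℂ) ^ 4 = ((z - p) * ((starRingEnd ℂ) z - q)) ^ 2 := by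
      have h2 : ((‖z - p‖ : ℝ) : ℂ) ^ 2 = (z - p) * (starRingEnd ℂ) (z - p) := by
        rw [Complex.mul_conj]
        norm_cast
        exact Complex.sq_norm _
      calc ((‖z - p‖ : ℝ) : ℂ) ^ 4
          = (((‖z - p‖ : ℝ) : ℂ) ^ 2) ^ 2 := by ring
        _ = ((z - p) * ((starRingEnd ℂ) z - q)) ^ 2 := by rw [h2, map_sub]
    push_cast
    rw [h4]
    have hz0 : z ≠ 0 := by rintro rfl; simp at habsz
    have hc : (starRingEnd ℂ) z = z⁻¹ := eq_inv_of_mul_eq_one_right hzc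
    rw [hc]
    have hq1 : z⁻¹ - q = (1 - q * z) / z := by field_simp
    rw [hq1]
    have hII : I * I = -1 := Complex.I_mul_I
    field_simp
    linear_combination ((1 - q * z) ^ 2)⁻¹ * hII
  have hg : (∫ t in (0:ℝ)..(2*Real.pi), deriv (circleMap 0 1) t *
        (circleMap 0 1 t / ((circleMap 0 1 t - p) ^ 2 * (1 - q * circleMap 0 1 t) ^ 2)))
      = ∮ z in C((0:ℂ),1), z / ((z - p) ^ 2 * (1 - q * z) ^ 2) := by
    simp only [circleIntegral, smul_eq_mul]
  have hInt : (∫ t in (0:ℝ)..(2*Real.pi),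
      ((1 / (‖Complex.exp (t * I) - p‖) ^ 4 : ℝ) : ℂ)) = 2 * Real.pi * A := by
    rw [intervalIntegral.integral_congr (g := fun t => -I * (deriv (circleMap 0 1) t *
        (circleMap 0 1 t / ((circleMap 0 1 t - p) ^ 2 * (1 - q * circleMap 0 1 t) ^ 2))))
        (fun t _ => key2 t)]
    rw [intervalIntegral.integral_const_mul, hg, key]
    linear_combination (-(2 * (Real.pi:ℂ) * A)) * Complex.I_sq
  have hcast : ((∫ t in (0:ℝ)..(2*Real.pi),
      1 / (‖Complex.exp (t * I) - p‖) ^ 4 : ℝ) : ℂ) = 2 * Real.pi * A := by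
    rw [← hInt, intervalIntegral.integral_ofReal]
  have hRHS : ((2 * Real.pi * (1 / (1 - (‖p‖) ^ 2) ^ 2 +
      2 * (‖p‖) ^ 2 / (1 - (‖p‖) ^ 2) ^ 3) : ℝ) : ℂ) = 2 * Real.pi * A := by
    have habs2 : ((‖p‖ : ℝ) : ℂ) ^ 2 = p * q := by
      rw [hqdef, Complex.mul_conj]
      norm_cast
      exact Complex.sq_norm _
    push_cast
    rw [habs2, hAdef]
    field_simp
    ring
  apply Complex.ofReal_injective
  exact hcast.trans hRHS.symm
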